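/- Let Σ_prior, Σ_like be positive definite d×d matrices, A₁ = (Σ_prior⁻¹ + Σ_like⁻¹)⁻¹ Σ_prior⁻¹, and Σ_post = (Σ_prior⁻¹ + Σ_like⁻¹)⁻¹. Then choosing Σ₀ = Σ_prior + Σ_prior² Σ_like⁻¹ gives A₁ Σ₀ A₁ᵀ = Σ_post, provided Σ_prior and Σ_like commute (e.g. are symmetric and simultaneously diagonalizable). -/

import Mathlib

open Matrix

/-- Choosing the anchor noise covariance `Σ₀ = Σ_prior + Σ_prior² Σ_like⁻¹` gives
`A₁ Σ₀ A₁ᵀ = Σ_post` where `A₁ = (Σ_prior⁻¹ + Σ_like⁻¹)⁻¹ Σ_prior⁻¹` and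
`Σ_post = (Σ_prior⁻¹ + Σ_like⁻¹)⁻¹`, provided `Σ_prior` and `Σ_like` commute. -/
theorem stmt_2 {d : ℕ} (Sprior Slike : Matrix (Fin d) (Fin d) ℝ)
    (hprior : Sprior.PosDef) (hlike : Slike.PosDef)
    (hcomm : Sprior * Slike = Slike * Sprior) :
    ((Sprior⁻¹ + Slike⁻¹)⁻¹ * Sprior⁻¹) * (Sprior + Sprior ^ 2 * Slike⁻¹) *
        ((Sprior⁻¹ + Slike⁻¹)⁻¹ * Sprior⁻¹)ᵀ =
      (Sprior⁻¹ + Slike⁻¹)⁻¹ := by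
  have hS : (Sprior⁻¹ + Slike⁻¹).PosDef := hprior.inv.add hlike.inv
  have hpu : IsUnit Sprior.det := hprior.det_pos.ne'.isUnit
  have hlu : IsUnit Slike.det := hlike.det_pos.ne'.isUnit
  have hSu : IsUnit (Sprior⁻¹ + Slike⁻¹).det := hS.det_pos.ne'.isUnit
  -- symmetry facts
  have hpsymm : Sprior⁻¹ᵀ = Sprior⁻¹ := by
    have := hprior.inv.isHermitian.eq
    exact (Matrix.conjTranspose_eq_transpose_of_trivial _).symm.trans this
  have hSsymm : ((Sprior⁻¹ + Slike⁻¹)⁻¹)ᵀ = (Sprior⁻¹ + Slike⁻¹)⁻¹ := by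
    have := hS.inv.isHermitian.eq
    exact (Matrix.conjTranspose_eq_transpose_of_trivial _).symm.trans this
  -- commutation of Sprior with Slike⁻¹
  have hcomm' : Sprior * Slike⁻¹ = Slike⁻¹ * Sprior := by
    have h1 : Slike⁻¹ * (Sprior * Slike) * Slike⁻¹ = Slike⁻¹ * (Slike * Sprior) * Slike⁻¹ := by
      rw [hcomm]
    calc Sprior * Slike⁻¹ = Slike⁻¹ * (Slike * Sprior) * Slike⁻¹ := by
          rw [← Matrix.mul_assoc, Matrix.nonsing_inv_mul _ hlu, Matrix.one_mul]
      _ = Slike⁻¹ * (Sprior * Slike) * Slike⁻¹ := by rw [hcomm]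
      _ = Slike⁻¹ * Sprior := by
          rw [Matrix.mul_assoc, Matrix.mul_assoc, Matrix.mul_nonsing_inv _ hlu,
            Matrix.mul_one]
  -- key: Sprior + Sprior² Slike⁻¹ = Sprior * (Sprior⁻¹ + Slike⁻¹) * Sprior
  have hkey : Sprior + Sprior ^ 2 * Slike⁻¹
      = Sprior * (Sprior⁻¹ + Slike⁻¹) * Sprior := by
    rw [Matrix.mul_add, Matrix.add_mul, Matrix.mul_nonsing_inv _ hpu, Matrix.one_mul,
      Matrix.mul_assoc, ← hcomm', ← Matrix.mul_assoc, sq]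
  rw [hkey, Matrix.transpose_mul, hpsymm, hSsymm]
  calc ((Sprior⁻¹ + Slike⁻¹)⁻¹ * Sprior⁻¹) * (Sprior * (Sprior⁻¹ + Slike⁻¹) * Sprior) *
        (Sprior⁻¹ * (Sprior⁻¹ + Slike⁻¹)⁻¹)
      = (Sprior⁻¹ + Slike⁻¹)⁻¹ * (Sprior⁻¹ * Sprior) * (Sprior⁻¹ + Slike⁻¹) *
        (Sprior * Sprior⁻¹) * (Sprior⁻¹ + Slike⁻¹)⁻¹ := by
        simp only [Matrix.mul_assoc]
    _ = (Sprior⁻¹ + Slike⁻¹)⁻¹ := by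
        rw [Matrix.nonsing_inv_mul _ hpu, Matrix.mul_nonsing_inv _ hpu, Matrix.mul_one,
          Matrix.mul_one, Matrix.nonsing_inv_mul _ hSu, Matrix.one_mul]
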